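/- For every natural number k ≥ 0 and every n, the map o_n restricted to S_n ∩ W_{n+k}^N is an order isomorphism from (S_n ∩ W_{n+k}^N, ≺) onto (ω_{k+1}, <), where ω_1 = ω, ω_{j+1} = ω^{ω_j} computed inside ordinal arithmetic (explicitly, ω_{k+1} is the tower of (k+1) ω-exponentiations applied to 1). -/

import Mathlib

open scoped Classical

/-- Words: finite strings over the alphabet of natural numbers. -/
abbrev Word := List ℕ

/-- Lexicographic "not greater" comparison of finite sequences of words,
where entries are compared with the preorder `r`. -/
def LexLe (r : Word → Word → Prop) (xs ys : List Word) : Prop :=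
  (xs.length ≤ ys.length ∧ ∀ i < xs.length,
      r (xs.getD i []) (ys.getD i []) ∧ r (ys.getD i []) (xs.getD i []))
  ∨ ∃ s, s < xs.length ∧ s < ys.length ∧
      (∀ i < s, r (xs.getD i []) (ys.getD i []) ∧ r (ys.getD i []) (xs.getD i [])) ∧
      r (xs.getD s []) (ys.getD s []) ∧ ¬ r (ys.getD s []) (xs.getD s [])

/-- `M` is a lexicographically maximal subsequence of `xs` (w.r.t. entry preorder `r`). -/
def IsLexMax (r : Word → Word → Prop) (xs M : List Word) : Prop :=
  M.Sublist xs ∧ ∀ N : List Word, N.Sublist xs → LexLe r N M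

/-- Fuelled version of the recursively defined preorder `≾` on words:
`Λ ≾ Λ`; and if `n` is the minimal symbol of `A ++ B`, split `A` and `B` into
blocks at `n` and compare the lexicographically maximal subsequences of blocks. -/
def leAux : ℕ → Word → Word → Prop
  | 0, A, B => A = [] ∧ B = []
  | (fuel+1), A, B =>
      (A = [] ∧ B = []) ∨
      (∀ m, (A ++ B).min? = some m →
        ∀ MA MB : List Word, IsLexMax (leAux fuel) (A.splitOn m) MA →
          IsLexMax (leAux fuel) (B.splitOn m) MB →
          LexLe (leAux fuel) MA MB)

/-- The preorder `≾` on words (the fuel `|A|+|B|+1` suffices for the recursion). -/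
def Wle (A B : Word) : Prop := leAux (A.length + B.length + 1) A B

/-- The equivalence `∼`: `A ≾ B` and `B ≾ A`. -/
def Wequiv (A B : Word) : Prop := Wle A B ∧ Wle B A

/-- The strict relation `≺`: `A ≾ B` and not `B ≾ A`. -/
def Wlt (A B : Word) : Prop := Wle A B ∧ ¬ Wle B A

/-- Fuelled version of the normal form predicate `NF`. -/
def NFAux : ℕ → Word → Prop
  | 0, A => A = []
  | (fuel+1), A => A = [] ∨ ∀ m, A.min? = some m →
      (A.splitOn m).Chain' (fun x y => Wle y x) ∧ ∀ b ∈ A.splitOn m, NFAux fuel b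

/-- `A` is in normal form. -/
def InNF (A : Word) : Prop := NFAux A.length A

/-- `◇ₖ A`: the normal form of the word `A` with symbol `k` appended. -/
noncomputable def diamond (k : ℕ) (A : Word) : Word :=
  if h : ∃ B, InNF B ∧ Wequiv B (A ++ [k]) then h.choose else []

/-- Fuelled version of the ordinal value functions `o_n` on normal-form words in `S_n`. -/
noncomputable def oAux : ℕ → ℕ → Word → Ordinal
  | 0, _, _ => 0
  | (fuel+1), n, A =>
      if A.all (· = n) then (A.length : Ordinal)
      else ((A.splitOn n).map (fun b => Ordinal.omega0 ^ oAux fuel (n+1) b)).foldr (· + ·) 0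

/-- The ordinal value function `o_n : NF ∩ S_n → Ordinals`. -/
noncomputable def oW (n : ℕ) (A : Word) : Ordinal :=
  oAux (A.foldr max 0 + A.length + 1) n A

/-- The towers of `ω`-exponentiations: `ω_0 = 1`, `ω_{n+1} = ω ^ ω_n`. -/
noncomputable def omegaTower : ℕ → Ordinal
  | 0 => 1
  | (n+1) => Ordinal.omega0 ^ omegaTower n

/-- `ε₀`, the supremum of the `ω`-towers. -/
noncomputable def eps0 : Ordinal := ⨆ n : ℕ, omegaTower n

/-- The function `ψ` on ordinals: `ψ 0 = ω`, and for `α > 0` with Cantor normal form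
`ω^{α_1}+⋯+ω^{α_n}` (non-increasing exponents), `ψ α = ω^{α_1}+⋯+ω^{α_{n-1}}+ω^{α_n+1}`. -/
noncomputable def psi (α : Ordinal) : Ordinal :=
  match (Ordinal.CNF Ordinal.omega0 α).getLast? with
  | none => Ordinal.omega0
  | some p =>
      ((Ordinal.CNF Ordinal.omega0 α).dropLast).foldr
        (fun q r => Ordinal.omega0 ^ q.1 * q.2 + r) 0
      + (Ordinal.omega0 ^ p.1 * (p.2 - 1) + Ordinal.omega0 ^ (p.1 + 1))

/-- The standard fundamental sequences `α[n]` for limit ordinals below `ε₀`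
(junk values elsewhere). -/
noncomputable def fundSeq (α : Ordinal) (n : ℕ) : Ordinal :=
  match (Ordinal.CNF Ordinal.omega0 α).getLast? with
  | none => 0
  | some p =>
    let pre := ((Ordinal.CNF Ordinal.omega0 α).dropLast).foldr
        (fun q r => Ordinal.omega0 ^ q.1 * q.2 + r) 0
      + Ordinal.omega0 ^ p.1 * (p.2 - 1)
    if p.1 = 0 then 0
    else if h : ∃ e', p.1 = e' + 1 then
      pre + Ordinal.omega0 ^ h.choose * ((n : Ordinal) + 1)
    else if hlt : p.1 < α then pre + Ordinal.omega0 ^ (fundSeq p.1 n) else 0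
termination_by α
decreasing_by exact hlt

/-- The relation `R`: `α R β` iff `β = α + 1`, or `β` is a limit and `α = β[n]` for some `n`. -/
def Rrel (α β : Ordinal) : Prop :=
  β = α + 1 ∨ (Order.IsSuccLimit β ∧ ∃ n : ℕ, α = fundSeq β n)
/-- `S_n ∩ W_{n+k}^N`: normal-form words with all symbols in `[n, n+k]`. -/
def SnWkN (n k : ℕ) : Set Word :=
  {A | (∀ c ∈ A, n ≤ c) ∧ (∀ c ∈ A, c ≤ n + k) ∧ InNF A}


section Ord
open Ordinal List


/-- Sum of omega-powers of a list of exponents. -/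
noncomputable def wsum (u : List Ordinal) : Ordinal := u.foldr (fun a r => omega0 ^ a + r) 0

/-- Nonincreasing list of ordinals. -/
def NI (u : List Ordinal) : Prop := u.Pairwise (fun a b => b ≤ a)

/-- Ordinal-level lexicographic comparison mirroring `LexLe`. -/
def OLex (u v : List Ordinal) : Prop :=
  (u.length ≤ v.length ∧ ∀ i < u.length, u.getD i 0 = v.getD i 0)
  ∨ ∃ s, s < u.length ∧ s < v.length ∧ (∀ i < s, u.getD i 0 = v.getD i 0) ∧ u.getD s 0 < v.getD s 0

@[simp] lemma wsum_nil : wsum [] = 0 := rfl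
@[simp] lemma wsum_cons (a : Ordinal) (u : List Ordinal) : wsum (a :: u) = omega0 ^ a + wsum u := rfl

lemma wsum_pos {u : List Ordinal} (h : u ≠ []) : 0 < wsum u := by
  cases u with
  | nil => simp at h
  | cons a u => exact lt_of_lt_of_le (opow_pos a omega0_pos) (le_self_add)

lemma le_wsum_of_sublist {u v : List Ordinal} (h : u.Sublist v) : wsum u ≤ wsum v := by
  induction h with
  | slnil => exact le_rfl
  | cons b _ ih => exact ih.trans (le_add_self)
  | cons_cons b _ ih => exact add_le_add_right ih _

lemma wsum_lt_opow {u : List Ordinal} {β : Ordinal} (h : ∀ a ∈ u, a < β) :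
    wsum u < omega0 ^ β := by
  induction u with
  | nil => simpa using opow_pos β omega0_pos
  | cons a u ih =>
    exact principal_add_omega0_opow β
      ((opow_lt_opow_iff_right one_lt_omega0).2 (h a mem_cons_self))
      (ih fun x hx => h x (mem_cons_of_mem a hx))

lemma NI_cons_le {a : Ordinal} {u : List Ordinal} (h : NI (a :: u)) : ∀ x ∈ u, x ≤ a :=
  fun x hx => (List.pairwise_cons.1 h).1 x hx

lemma NI_of_cons {a : Ordinal} {u : List Ordinal} (h : NI (a :: u)) : NI u :=
  (List.pairwise_cons.1 h).2

lemma wsum_lt_cons {a : Ordinal} {u : List Ordinal} (hni : NI (a :: u)) :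
    wsum u < wsum (a :: u) := by
  induction u generalizing a with
  | nil => simpa using opow_pos a omega0_pos
  | cons b u ih =>
    have hb : b ≤ a := NI_cons_le hni b mem_cons_self
    have hni' : NI (b :: u) := NI_of_cons hni
    have h1 : wsum u < wsum (b :: u) := ih hni'
    calc wsum (b :: u) = omega0 ^ b + wsum u := rfl
      _ < omega0 ^ b + (omega0 ^ b + wsum u) := add_lt_add_right (h1) _
      _ ≤ omega0 ^ a + (omega0 ^ b + wsum u) :=
          add_le_add_left ((opow_le_opow_iff_right one_lt_omega0).2 hb) _
      _ = wsum (a :: (b :: u)) := rfl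

lemma wsum_lt_of_sublist {u v : List Ordinal} (h : u.Sublist v) (hv : NI v)
    (hl : u.length < v.length) : wsum u < wsum v := by
  induction h with
  | slnil => simp at hl
  | @cons u v b h ih =>
    rcases lt_or_eq_of_le (List.Sublist.length_le h) with h' | h'
    · exact lt_of_lt_of_le (ih (NI_of_cons hv) h') (le_add_self)
    · rw [List.Sublist.eq_of_length h h']
      exact wsum_lt_cons hv
  | @cons_cons u v a h ih =>
    exact add_lt_add_right (ih (NI_of_cons hv) (by simpa using hl)) _

lemma wsum_inj : ∀ {u v : List Ordinal}, NI u → NI v → wsum u = wsum v → u = v := by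
  intro u
  induction u with
  | nil =>
    intro v _ _ h
    rcases v with _ | ⟨b, v⟩
    · rfl
    · exact absurd h.symm (ne_of_gt (wsum_pos (by simp)))
  | cons a u ih =>
    intro v hu hv h
    rcases v with _ | ⟨b, v⟩
    · exact absurd h (ne_of_gt (wsum_pos (by simp)))
    · have key : ∀ {x y : Ordinal} {p : List Ordinal}, NI (x :: p) → x < y →
          wsum (x :: p) < omega0 ^ y := by
        intro x y p hni hxy
        exact wsum_lt_opow (by
          intro c hc
          rcases List.mem_cons.1 hc with rfl | hc
          · exact hxy
          · exact lt_of_le_of_lt (NI_cons_le hni c hc) hxy)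
      rcases lt_trichotomy a b with hab | hab | hab
      · exact absurd h (ne_of_lt (lt_of_lt_of_le (key hu hab) (le_self_add)))
      · subst hab
        have := add_left_cancel h
        rw [ih (NI_of_cons hu) (NI_of_cons hv) this]
      · exact absurd h (ne_of_gt (lt_of_lt_of_le (key hv hab) (le_self_add)))

lemma OLex_nil (v : List Ordinal) : OLex [] v := Or.inl ⟨Nat.zero_le _, by simp⟩

lemma not_OLex_cons_nil {a : Ordinal} {u : List Ordinal} : ¬ OLex (a :: u) [] := by
  rintro (⟨h, _⟩ | ⟨s, _, hs, _⟩) <;> simp at *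

lemma OLex_cons_lt {a b : Ordinal} {u v : List Ordinal} (h : a < b) : OLex (a :: u) (b :: v) :=
  Or.inr ⟨0, by simp, by simp, by simp, by simpa using h⟩

lemma not_OLex_cons_gt {a b : Ordinal} {u v : List Ordinal} (h : b < a) : ¬ OLex (a :: u) (b :: v) := by
  rintro (⟨_, h0⟩ | ⟨s, hs1, hs2, hpre, hlt⟩)
  · have := h0 0 (by simp)
    simp at this
    exact absurd this (ne_of_gt h)
  · rcases Nat.eq_zero_or_pos s with rfl | hs
    · simp at hlt
      exact absurd hlt (not_lt.2 h.le)
    · have := hpre 0 hs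
      simp at this
      exact absurd this (ne_of_gt h)

lemma OLex_cons_cons {a : Ordinal} {u v : List Ordinal} : OLex (a :: u) (a :: v) ↔ OLex u v := by
  constructor
  · rintro (⟨hl, h0⟩ | ⟨s, hs1, hs2, hpre, hlt⟩)
    · refine Or.inl ⟨by simpa using hl, fun i hi => ?_⟩
      have := h0 (i + 1) (by simpa using hi)
      simpa using this
    · rcases Nat.eq_zero_or_pos s with rfl | hs
      · simp at hlt
      · obtain ⟨t, rfl⟩ : ∃ t, s = t + 1 := ⟨s - 1, by omega⟩
        refine Or.inr ⟨t, by simpa using hs1, by simpa using hs2, fun i hi => ?_, by simpa using hlt⟩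
        have := hpre (i + 1) (by omega)
        simpa using this
  · rintro (⟨hl, h0⟩ | ⟨s, hs1, hs2, hpre, hlt⟩)
    · refine Or.inl ⟨by simpa using hl, fun i hi => ?_⟩
      cases i with
      | zero => simp
      | succ j => simpa using h0 j (by simpa using hi)
    · refine Or.inr ⟨s + 1, by simpa using hs1, by simpa using hs2, fun i hi => ?_, by simpa using hlt⟩
      cases i with
      | zero => simp
      | succ j => simpa using hpre j (by omega)

lemma add_one_le_of_lt {a b : Ordinal} (h : a < b) : a + 1 ≤ b := by
  rwa [Ordinal.add_one_eq_succ, Order.succ_le_iff]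

lemma wsum_lt_opow_of_NI_lt {a b : Ordinal} {u : List Ordinal} (hni : NI (a :: u)) (h : a < b) :
    wsum (a :: u) < omega0 ^ b :=
  wsum_lt_opow (by
    intro c hc
    rcases List.mem_cons.1 hc with rfl | hc
    · exact h
    · exact lt_of_le_of_lt (NI_cons_le hni c hc) h)

lemma wsum_lt_of_not_OLex : ∀ {u v : List Ordinal}, NI u → NI v → ¬ OLex u v → wsum v < wsum u := by
  intro u
  induction u with
  | nil => intro v _ _ h; exact absurd (OLex_nil v) h
  | cons a u ih =>
    intro v hu hv h
    rcases v with _ | ⟨b, v⟩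
    · simpa using wsum_pos (by simp : (a :: u) ≠ ([] : List Ordinal))
    · rcases lt_trichotomy a b with hab | hab | hab
      · exact absurd (OLex_cons_lt hab) h
      · subst hab
        have := ih (NI_of_cons hu) (NI_of_cons hv) (fun hc => h (OLex_cons_cons.2 hc))
        exact add_lt_add_right this _
      · exact lt_of_lt_of_le (wsum_lt_opow_of_NI_lt hv hab) (le_self_add)

lemma OLex_wsum : ∀ {u v : List Ordinal}, NI u → NI v → OLex u v → wsum u ≤ wsum v := by
  intro u
  induction u with
  | nil => intro v _ _ _; simp
  | cons a u ih =>
    intro v hu hv h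
    rcases v with _ | ⟨b, v⟩
    · exact absurd h not_OLex_cons_nil
    · rcases lt_trichotomy a b with hab | hab | hab
      · exact le_of_lt (lt_of_lt_of_le (wsum_lt_opow_of_NI_lt hu hab) (le_self_add))
      · subst hab
        exact add_le_add_right (ih (NI_of_cons hu) (NI_of_cons hv) (OLex_cons_cons.1 h)) _
      · exact absurd h (not_OLex_cons_gt hab)

lemma OLex_iff_wsum {u v : List Ordinal} (hu : NI u) (hv : NI v) :
    OLex u v ↔ wsum u ≤ wsum v := by
  constructor
  · intro h; exact OLex_wsum hu hv h
  · intro h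
    by_contra hc
    exact absurd h (not_le.2 (wsum_lt_of_not_OLex hu hv hc))

end Ord

section Split
open List


lemma list_len_ind {P : Word → Prop} (H : ∀ A, (∀ B : Word, B.length < A.length → P B) → P A) :
    ∀ A, P A := by
  intro A
  generalize hn : A.length = n
  induction n using Nat.strong_induction_on generalizing A with
  | _ n ih => exact H A (fun B hB => ih B.length (hn ▸ hB) B rfl)

lemma splitOn_of_not_mem {m : ℕ} {A : Word} (h : m ∉ A) : A.splitOn m = [A] :=
  List.splitOnP_eq_single (by intro x hx; simp only [beq_eq_false_iff_ne]; rintro rfl; exact h hx)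

lemma splitOn_first' {m : ℕ} {A₁ A₂ : Word} (h : m ∉ A₁) :
    (A₁ ++ m :: A₂).splitOn m = A₁ :: A₂.splitOn m :=
  List.splitOnP_first (by intro x hx; simp only [beq_eq_false_iff_ne]; rintro rfl; exact h hx) m
    (by simp) A₂

lemma exists_first_occ {m : ℕ} {A : Word} (h : m ∈ A) :
    ∃ A₁ A₂, A = A₁ ++ m :: A₂ ∧ m ∉ A₁ := by
  induction A with
  | nil => simp at h
  | cons a A ih =>
    by_cases ha : a = m
    · exact ⟨[], A, by simp [ha], by simp⟩
    · rcases ih (by rcases List.mem_cons.1 h with h | h; exacts [absurd h.symm ha, h])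
        with ⟨A₁, A₂, rfl, hm⟩
      exact ⟨a :: A₁, A₂, by simp, by simp [hm]; exact fun hc => ha hc.symm⟩

lemma splitOn_cases (m : ℕ) (A : Word) :
    (m ∉ A ∧ A.splitOn m = [A]) ∨
      ∃ A₁ A₂, A = A₁ ++ m :: A₂ ∧ m ∉ A₁ ∧ A.splitOn m = A₁ :: A₂.splitOn m := by
  by_cases h : m ∈ A
  · rcases exists_first_occ h with ⟨A₁, A₂, rfl, hm⟩
    exact Or.inr ⟨A₁, A₂, rfl, hm, splitOn_first' hm⟩
  · exact Or.inl ⟨h, splitOn_of_not_mem h⟩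

lemma splitOn_ne_nil (m : ℕ) (A : Word) : A.splitOn m ≠ [] := List.splitOnP_ne_nil _ A

lemma mem_of_mem_splitOn {m : ℕ} : ∀ (A : Word), ∀ b ∈ A.splitOn m, ∀ x ∈ b, x ∈ A ∧ x ≠ m := by
  refine list_len_ind (fun A ih => ?_)
  intro b hb x hx
  rcases splitOn_cases m A with ⟨hm, hs⟩ | ⟨A₁, A₂, rfl, hm, hs⟩
  · rw [hs] at hb; simp at hb; subst hb
    exact ⟨hx, fun hc => hm (hc ▸ hx)⟩
  · rw [hs] at hb
    rcases List.mem_cons.1 hb with rfl | hb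
    · exact ⟨by simp [hx], fun hc => hm (hc ▸ hx)⟩
    · have := ih A₂ (by simp; omega) b hb x hx
      exact ⟨by simp [this.1], this.2⟩

lemma length_le_of_mem_splitOn {m : ℕ} : ∀ (A : Word), ∀ b ∈ A.splitOn m, b.length ≤ A.length := by
  refine list_len_ind (fun A ih => ?_)
  intro b hb
  rcases splitOn_cases m A with ⟨hm, hs⟩ | ⟨A₁, A₂, rfl, hm, hs⟩
  · rw [hs] at hb; simp at hb; subst hb; rfl
  · rw [hs] at hb
    rcases List.mem_cons.1 hb with rfl | hb
    · simp
    · have := ih A₂ (by simp; omega) b hb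
      simp
      omega

lemma length_lt_of_mem_splitOn {m : ℕ} {A : Word} (hm : m ∈ A) :
    ∀ b ∈ A.splitOn m, b.length < A.length := by
  intro b hb
  rcases splitOn_cases m A with ⟨hm', _⟩ | ⟨A₁, A₂, rfl, hm', hs⟩
  · exact absurd hm hm'
  · rw [hs] at hb
    rcases List.mem_cons.1 hb with rfl | hb
    · simp
    · have := length_le_of_mem_splitOn A₂ b hb
      simp
      omega

lemma splitOn_replicate (j m : ℕ) :
    (List.replicate j m).splitOn m = List.replicate (j + 1) [] := by
  induction j with
  | zero => simp
  | succ j ih =>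
    have : List.replicate (j+1) m = [] ++ m :: List.replicate j m := by
      simp [List.replicate_succ]
    rw [this, splitOn_first' (by simp), ih]
    simp [List.replicate_succ]

lemma toFinset_card_lt_of_forall {x A : List ℕ} {m : ℕ} (hm : m ∈ A)
    (h : ∀ c ∈ x, c ∈ A ∧ c ≠ m) : x.toFinset.card < A.toFinset.card := by
  have hsub : x.toFinset ⊆ A.toFinset.erase m := by
    intro c hc
    have hc' := h c (List.mem_toFinset.1 hc)
    exact Finset.mem_erase.2 ⟨hc'.2, List.mem_toFinset.2 hc'.1⟩
  have h1 := Finset.card_le_card hsub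
  have h2 : (A.toFinset.erase m).card < A.toFinset.card :=
    Finset.card_erase_lt_of_mem (List.mem_toFinset.2 hm)
  omega

lemma nat_min?_eq_some_iff {l : List ℕ} {m : ℕ} :
    l.min? = some m ↔ m ∈ l ∧ ∀ x ∈ l, m ≤ x :=
  List.min?_eq_some_iff

lemma getD_mem_or_eq_nil (l : List Word) (i : ℕ) : l.getD i [] ∈ l ∨ l.getD i [] = [] := by
  by_cases h : i < l.length
  · left; rw [List.getD_eq_getElem _ _ h]; exact List.getElem_mem _
  · right; exact List.getD_eq_default _ _ (le_of_not_gt h)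

end Split

section SectB
open List Ordinal

lemma LexLe_congr {r r' : Word → Word → Prop} {xs ys : List Word}
    (h : ∀ x y, (x ∈ xs ∨ x = []) → (y ∈ ys ∨ y = []) → (r x y ↔ r' x y) ∧ (r y x ↔ r' y x)) :
    LexLe r xs ys ↔ LexLe r' xs ys := by
  have hx : ∀ i, xs.getD i [] ∈ xs ∨ xs.getD i [] = [] := fun i => getD_mem_or_eq_nil xs i
  have hy : ∀ i, ys.getD i [] ∈ ys ∨ ys.getD i [] = [] := fun i => getD_mem_or_eq_nil ys i
  unfold LexLe
  constructor
  · rintro (⟨h1, h2⟩ | ⟨s, hs1, hs2, hpre, hlt, hnlt⟩)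
    · exact Or.inl ⟨h1, fun i hi => ⟨((h _ _ (hx i) (hy i)).1).1 (h2 i hi).1,
        ((h _ _ (hx i) (hy i)).2).1 (h2 i hi).2⟩⟩
    · exact Or.inr ⟨s, hs1, hs2, fun i hi => ⟨((h _ _ (hx i) (hy i)).1).1 (hpre i hi).1,
        ((h _ _ (hx i) (hy i)).2).1 (hpre i hi).2⟩,
        ((h _ _ (hx s) (hy s)).1).1 hlt, fun hc => hnlt (((h _ _ (hx s) (hy s)).2).2 hc)⟩
  · rintro (⟨h1, h2⟩ | ⟨s, hs1, hs2, hpre, hlt, hnlt⟩)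
    · exact Or.inl ⟨h1, fun i hi => ⟨((h _ _ (hx i) (hy i)).1).2 (h2 i hi).1,
        ((h _ _ (hx i) (hy i)).2).2 (h2 i hi).2⟩⟩
    · exact Or.inr ⟨s, hs1, hs2, fun i hi => ⟨((h _ _ (hx i) (hy i)).1).2 (hpre i hi).1,
        ((h _ _ (hx i) (hy i)).2).2 (hpre i hi).2⟩,
        ((h _ _ (hx s) (hy s)).1).2 hlt, fun hc => hnlt (((h _ _ (hx s) (hy s)).2).1 hc)⟩

lemma IsLexMax_congr {r r' : Word → Word → Prop} {xs M : List Word}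
    (h : ∀ x y, (x ∈ xs ∨ x = []) → (y ∈ xs ∨ y = []) → (r x y ↔ r' x y)) :
    IsLexMax r xs M ↔ IsLexMax r' xs M := by
  unfold IsLexMax
  constructor
  · rintro ⟨hM, hall⟩
    refine ⟨hM, fun N hN => ?_⟩
    have := hall N hN
    rwa [LexLe_congr (fun x y hx hy => ?_)] at this
    have hx' : x ∈ xs ∨ x = [] := by rcases hx with hx | hx; exacts [Or.inl (hN.subset hx), Or.inr hx]
    have hy' : y ∈ xs ∨ y = [] := by rcases hy with hy | hy; exacts [Or.inl (hM.subset hy), Or.inr hy]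
    exact ⟨h x y hx' hy', h y x hy' hx'⟩
  · rintro ⟨hM, hall⟩
    refine ⟨hM, fun N hN => ?_⟩
    have := hall N hN
    rwa [LexLe_congr (fun x y hx hy => ?_)]
    have hx' : x ∈ xs ∨ x = [] := by rcases hx with hx | hx; exacts [Or.inl (hN.subset hx), Or.inr hx]
    have hy' : y ∈ xs ∨ y = [] := by rcases hy with hy | hy; exacts [Or.inl (hM.subset hy), Or.inr hy]
    exact ⟨h x y hx' hy', h y x hy' hx'⟩

lemma block_cond {A B x y : Word} {m : ℕ} (hm : m ∈ A ++ B)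
    (hx : x ∈ A.splitOn m ∨ x ∈ B.splitOn m ∨ x = [])
    (hy : y ∈ A.splitOn m ∨ y ∈ B.splitOn m ∨ y = []) :
    (x ++ y).toFinset.card < (A ++ B).toFinset.card := by
  apply toFinset_card_lt_of_forall hm
  intro c hc
  have key : ∀ z : Word, (z ∈ A.splitOn m ∨ z ∈ B.splitOn m ∨ z = []) → ∀ c ∈ z, c ∈ A ++ B ∧ c ≠ m := by
    rintro z (hz | hz | rfl) c hc
    · have := mem_of_mem_splitOn A z hz c hc
      exact ⟨List.mem_append.2 (Or.inl this.1), this.2⟩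
    · have := mem_of_mem_splitOn B z hz c hc
      exact ⟨List.mem_append.2 (Or.inr this.1), this.2⟩
    · simp at hc
  rcases List.mem_append.1 hc with hc | hc
  · exact key x hx c hc
  · exact key y hy c hc

lemma leAux_congr_fuel : ∀ f g (A B : Word), (A ++ B).toFinset.card < f →
    (A ++ B).toFinset.card < g → (leAux f A B ↔ leAux g A B) := by
  intro f
  induction f with
  | zero => intro g A B hf; omega
  | succ f ih =>
    intro g A B hf hg
    rcases g with _ | g
    · omega
    simp only [leAux]
    apply or_congr Iff.rfl
    apply forall_congr'
    intro m
    constructor <;> intro H hm MA MB hMA hMB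
    · have hmem : m ∈ A ++ B := (nat_min?_eq_some_iff.1 hm).1
      have hconv : ∀ x y : Word, (x ∈ A.splitOn m ∨ x ∈ B.splitOn m ∨ x = []) →
          (y ∈ A.splitOn m ∨ y ∈ B.splitOn m ∨ y = []) → (leAux f x y ↔ leAux g x y) := by
        intro x y hx hy
        have hcard := block_cond hmem hx hy
        exact ih g x y (by omega) (by omega)
      have hMA' : IsLexMax (leAux f) (A.splitOn m) MA := by
        rw [IsLexMax_congr (fun x y hx hy => hconv x y ?_ ?_)]; exact hMA
        · rcases hx with hx | hx; exacts [Or.inl hx, Or.inr (Or.inr hx)]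
        · rcases hy with hy | hy; exacts [Or.inl hy, Or.inr (Or.inr hy)]
      have hMB' : IsLexMax (leAux f) (B.splitOn m) MB := by
        rw [IsLexMax_congr (fun x y hx hy => hconv x y ?_ ?_)]; exact hMB
        · rcases hx with hx | hx; exacts [Or.inr (Or.inl hx), Or.inr (Or.inr hx)]
        · rcases hy with hy | hy; exacts [Or.inr (Or.inl hy), Or.inr (Or.inr hy)]
      have := H hm MA MB hMA' hMB'
      rwa [LexLe_congr (fun x y hx hy => ?_)] at this
      have hx' : x ∈ A.splitOn m ∨ x ∈ B.splitOn m ∨ x = [] := by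
        rcases hx with hx | hx
        · exact Or.inl (hMA'.1.subset hx)
        · exact Or.inr (Or.inr hx)
      have hy' : y ∈ A.splitOn m ∨ y ∈ B.splitOn m ∨ y = [] := by
        rcases hy with hy | hy
        · exact Or.inr (Or.inl (hMB'.1.subset hy))
        · exact Or.inr (Or.inr hy)
      exact ⟨hconv x y hx' hy', hconv y x hy' hx'⟩
    · have hmem : m ∈ A ++ B := (nat_min?_eq_some_iff.1 hm).1
      have hconv : ∀ x y : Word, (x ∈ A.splitOn m ∨ x ∈ B.splitOn m ∨ x = []) →
          (y ∈ A.splitOn m ∨ y ∈ B.splitOn m ∨ y = []) → (leAux f x y ↔ leAux g x y) := by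
        intro x y hx hy
        have hcard := block_cond hmem hx hy
        exact ih g x y (by omega) (by omega)
      have hMA' : IsLexMax (leAux g) (A.splitOn m) MA := by
        rw [← IsLexMax_congr (fun x y hx hy => hconv x y ?_ ?_)]; exact hMA
        · rcases hx with hx | hx; exacts [Or.inl hx, Or.inr (Or.inr hx)]
        · rcases hy with hy | hy; exacts [Or.inl hy, Or.inr (Or.inr hy)]
      have hMB' : IsLexMax (leAux g) (B.splitOn m) MB := by
        rw [← IsLexMax_congr (fun x y hx hy => hconv x y ?_ ?_)]; exact hMB
        · rcases hx with hx | hx; exacts [Or.inr (Or.inl hx), Or.inr (Or.inr hx)]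
        · rcases hy with hy | hy; exacts [Or.inr (Or.inl hy), Or.inr (Or.inr hy)]
      have := H hm MA MB hMA' hMB'
      rwa [LexLe_congr (fun x y hx hy => ?_)]
      have hx' : x ∈ A.splitOn m ∨ x ∈ B.splitOn m ∨ x = [] := by
        rcases hx with hx | hx
        · exact Or.inl (hMA.1.subset hx)
        · exact Or.inr (Or.inr hx)
      have hy' : y ∈ A.splitOn m ∨ y ∈ B.splitOn m ∨ y = [] := by
        rcases hy with hy | hy
        · exact Or.inr (Or.inl (hMB.1.subset hy))
        · exact Or.inr (Or.inr hy)
      exact ⟨hconv x y hx' hy', hconv y x hy' hx'⟩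

lemma Wle_iff_leAux {f : ℕ} {A B : Word} (hf : (A ++ B).toFinset.card < f) :
    Wle A B ↔ leAux f A B := by
  apply leAux_congr_fuel
  · have := List.toFinset_card_le (A ++ B)
    simp at this ⊢
    omega
  · exact hf

end SectB

section SectC
open List Ordinal

lemma NFAux_nil : ∀ g, NFAux g [] := by
  intro g
  cases g with
  | zero => rfl
  | succ g => exact Or.inl rfl

lemma NFAux_congr_fuel : ∀ f g (A : Word), A.length ≤ f → A.length ≤ g →
    (NFAux f A ↔ NFAux g A) := by
  intro f
  induction f with
  | zero =>
    intro g A hf _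
    have : A = [] := List.length_eq_zero_iff.1 (Nat.le_zero.1 hf)
    subst this
    simp only [NFAux_nil]
  | succ f ih =>
    intro g A hf hg
    rcases eq_or_ne A [] with rfl | hA
    · simp only [NFAux_nil]
    rcases g with _ | g
    · exact absurd (List.length_eq_zero_iff.1 (Nat.le_zero.1 hg)) hA
    simp only [NFAux]
    constructor <;> rintro (rfl | H) <;> try exact absurd rfl hA
    · refine Or.inr (fun m hm => ?_)
      obtain ⟨hchain, hb⟩ := H m hm
      refine ⟨hchain, fun b hbmem => ?_⟩
      have hmA : m ∈ A := (nat_min?_eq_some_iff.1 hm).1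
      have hlen := length_lt_of_mem_splitOn hmA b hbmem
      exact (ih g b (by omega) (by omega)).1 (hb b hbmem)
    · refine Or.inr (fun m hm => ?_)
      obtain ⟨hchain, hb⟩ := H m hm
      refine ⟨hchain, fun b hbmem => ?_⟩
      have hmA : m ∈ A := (nat_min?_eq_some_iff.1 hm).1
      have hlen := length_lt_of_mem_splitOn hmA b hbmem
      exact (ih g b (by omega) (by omega)).2 (hb b hbmem)

lemma InNF_nil : InNF [] := NFAux_nil 0

lemma InNF_iff_blocks {A : Word} {m : ℕ} (hA : A ≠ []) (hm : A.min? = some m) :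
    InNF A ↔ (A.splitOn m).Chain' (fun x y => Wle y x) ∧ ∀ b ∈ A.splitOn m, InNF b := by
  have h1 : NFAux A.length A ↔ NFAux (A.length + 1) A :=
    NFAux_congr_fuel _ _ _ le_rfl (by omega)
  unfold InNF
  rw [h1]
  have hmA : m ∈ A := (nat_min?_eq_some_iff.1 hm).1
  simp only [NFAux]
  constructor
  · rintro (rfl | H)
    · exact absurd rfl hA
    · obtain ⟨hchain, hb⟩ := H m hm
      refine ⟨hchain, fun b hbmem => ?_⟩
      have hlen := length_lt_of_mem_splitOn hmA b hbmem
      exact (NFAux_congr_fuel _ _ _ (by omega) le_rfl).1 (hb b hbmem)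
  · rintro ⟨hchain, hb⟩
    refine Or.inr (fun m' hm' => ?_)
    have : m = m' := by rw [hm] at hm'; exact Option.some_inj.1 hm'
    subst this
    refine ⟨hchain, fun b hbmem => ?_⟩
    have hlen := length_lt_of_mem_splitOn hmA b hbmem
    exact (NFAux_congr_fuel _ _ _ le_rfl (by omega)).1 (hb b hbmem)

lemma le_foldr_max {c : ℕ} : ∀ {A : Word}, c ∈ A → c ≤ A.foldr max 0 := by
  intro A
  induction A with
  | nil => intro h; simp at h
  | cons a A ih =>
    intro h
    rcases List.mem_cons.1 h with rfl | h
    · exact le_max_left _ _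
    · exact le_trans (ih h) (le_max_right _ _)

lemma foldr_max_le {M : ℕ} : ∀ {A : Word}, (∀ c ∈ A, c ≤ M) → A.foldr max 0 ≤ M := by
  intro A
  induction A with
  | nil => intro _; simp
  | cons a A ih =>
    intro h
    simp only [List.foldr_cons]
    exact max_le (h a (List.mem_cons_self)) (ih (fun c hc => h c (List.mem_cons_of_mem _ hc)))

lemma oAux_congr_fuel : ∀ f g n (A : Word), (∀ c ∈ A, n ≤ c) →
    A.foldr max 0 + A.length < f + n → A.foldr max 0 + A.length < g + n →
    oAux f n A = oAux g n A := by
  have key : ∀ f n (A : Word), A = [] → oAux f n A = 0 := by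
    intro f n A hA
    subst hA
    cases f with
    | zero => rfl
    | succ f => simp [oAux]
  intro f
  induction f with
  | zero =>
    intro g n A hS hf hg
    have hA : A = [] := by
      rcases A with _ | ⟨a, A⟩
      · rfl
      · exfalso
        have h1 : n ≤ a := hS a (List.mem_cons_self)
        have h2 : a ≤ (a :: A).foldr max 0 := le_foldr_max (List.mem_cons_self)
        simp at hf
        omega
    rw [key 0 n A hA, key g n A hA]
  | succ f ih =>
    intro g n A hS hf hg
    rcases eq_or_ne A [] with rfl | hA
    · rw [key (f+1) n [] rfl, key g n [] rfl]
    have bound : n + 1 ≤ A.foldr max 0 + A.length := by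
      rcases A with _ | ⟨a, A'⟩
      · exact absurd rfl hA
      · have h1 : n ≤ a := hS a (List.mem_cons_self)
        have h2 : a ≤ (a :: A').foldr max 0 := le_foldr_max (List.mem_cons_self)
        simp only [List.length_cons]
        omega
    rcases g with _ | g
    · omega
    simp only [oAux]
    by_cases hall : A.all (· = n)
    · rw [if_pos hall, if_pos hall]
    rw [if_neg hall, if_neg hall]
    congr 1
    apply List.map_congr_left
    intro b hb
    have hSb : ∀ c ∈ b, n + 1 ≤ c := by
      intro c hc
      have := mem_of_mem_splitOn A b hb c hc
      have := hS c this.1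
      have := (mem_of_mem_splitOn A b hb c hc).2
      omega
    have hmaxb : b.foldr max 0 ≤ A.foldr max 0 :=
      foldr_max_le (fun c hc => le_foldr_max (mem_of_mem_splitOn A b hb c hc).1)
    have hlenb : b.length ≤ A.length := length_le_of_mem_splitOn A b hb
    congr 1
    exact ih g (n+1) b hSb (by omega) (by omega)

lemma oW_nil (n : ℕ) : oW n [] = 0 := by
  simp [oW, oAux]

lemma oW_all {n : ℕ} {A : Word} (h : A.all (· = n)) : oW n A = A.length := by
  rw [oW]
  have : A.foldr max 0 + A.length + 1 = (A.foldr max 0 + A.length) + 1 := rfl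
  rw [this]
  simp only [oAux, if_pos h]

lemma oW_eq_wsum {n : ℕ} {A : Word} (hS : ∀ c ∈ A, n ≤ c) (h : ¬ (A.all (· = n) = true)) :
    oW n A = wsum ((A.splitOn n).map (fun b => oW (n+1) b)) := by
  rw [oW]
  have hA : A ≠ [] := by rintro rfl; simp at h
  have : A.foldr max 0 + A.length + 1 = (A.foldr max 0 + A.length) + 1 := rfl
  rw [this]
  simp only [oAux, if_neg h]
  have hmap : (A.splitOn n).map (fun b => omega0 ^ oAux (A.foldr max 0 + A.length) (n+1) b)
      = (A.splitOn n).map (fun b => omega0 ^ oW (n+1) b) := by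
    apply List.map_congr_left
    intro b hb
    congr 1
    have hSb : ∀ c ∈ b, n + 1 ≤ c := by
      intro c hc
      have h1 := mem_of_mem_splitOn A b hb c hc
      have := hS c h1.1
      omega
    have hmaxb : b.foldr max 0 ≤ A.foldr max 0 :=
      foldr_max_le (fun c hc => le_foldr_max (mem_of_mem_splitOn A b hb c hc).1)
    have hlenb : b.length ≤ A.length := length_le_of_mem_splitOn A b hb
    exact oAux_congr_fuel _ _ _ _ hSb (by omega) (by omega)
  rw [hmap, wsum, List.foldr_map, List.foldr_map]

end SectC

section SectD
open List Ordinal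

lemma all_eq_iff {A : Word} {n : ℕ} : (A.all (· = n) = true) ↔ ∀ c ∈ A, c = n := by
  simp [List.all_eq_true]

lemma oW_pos {n : ℕ} {A : Word} (hS : ∀ c ∈ A, n ≤ c) (hA : A ≠ []) : 0 < oW n A := by
  by_cases hall : A.all (· = n)
  · rw [oW_all hall]
    simpa using List.length_pos_iff.2 hA
  · rw [oW_eq_wsum hS hall]
    apply wsum_pos
    simp only [ne_eq, List.map_eq_nil_iff]
    exact _root_.splitOn_ne_nil n A

lemma oW_singleblock {n : ℕ} {A : Word} (hS : ∀ c ∈ A, n + 1 ≤ c) (hA : A ≠ []) :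
    oW n A = omega0 ^ oW (n+1) A := by
  have hnot : n ∉ A := fun hc => by have := hS n hc; omega
  have hall : ¬ (A.all (· = n) = true) := by
    rw [all_eq_iff]
    intro hc
    rcases A with _ | ⟨a, A⟩
    · exact hA rfl
    · have := hc a (List.mem_cons_self)
      have := hS a (List.mem_cons_self)
      omega
  rw [oW_eq_wsum (fun c hc => le_trans (by omega) (hS c hc)) hall, splitOn_of_not_mem hnot]
  simp [wsum]

universe u

lemma oW_le_climb_step {n : ℕ} {A B : Word} (hA : ∀ c ∈ A, n + 1 ≤ c) (hB : ∀ c ∈ B, n + 1 ≤ c) :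
    (oW.{u} n A ≤ oW.{u} n B ↔ oW.{u} (n+1) A ≤ oW.{u} (n+1) B) := by
  rcases eq_or_ne A [] with rfl | hA'
  · simp [oW_nil]
  rcases eq_or_ne B [] with rfl | hB'
  · rw [oW_nil, oW_nil]
    constructor <;> intro h <;> exfalso
    · exact absurd h (not_le.2 (oW_pos (fun c hc => le_trans (by omega) (hA c hc)) hA'))
    · exact absurd h (not_le.2 (oW_pos hA hA'))
  rw [oW_singleblock hA hA', oW_singleblock hB hB']
  exact Ordinal.opow_le_opow_iff_right one_lt_omega0

lemma oW_le_climb {n m : ℕ} (hnm : n ≤ m) : ∀ {A B : Word}, (∀ c ∈ A, m ≤ c) → (∀ c ∈ B, m ≤ c) →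
    (oW.{u} n A ≤ oW.{u} n B ↔ oW.{u} m A ≤ oW.{u} m B) := by
  induction m, hnm using Nat.le_induction with
  | base => intro A B _ _; exact Iff.rfl
  | succ m hm ih =>
    intro A B hA hB
    rw [ih (fun c hc => le_trans (by omega) (hA c hc)) (fun c hc => le_trans (by omega) (hB c hc))]
    exact oW_le_climb_step hA hB

lemma oW_eq_climb {n m : ℕ} (hnm : n ≤ m) {A B : Word} (hA : ∀ c ∈ A, m ≤ c)
    (hB : ∀ c ∈ B, m ≤ c) : (oW.{u} n A = oW.{u} n B ↔ oW.{u} m A = oW.{u} m B) := by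
  rw [le_antisymm_iff, le_antisymm_iff, oW_le_climb hnm hA hB, oW_le_climb hnm hB hA]

lemma getD_map_zero {f : Word → Ordinal} (hf0 : f [] = 0) (l : List Word) (i : ℕ) :
    (l.map f).getD i 0 = f (l.getD i []) := by
  rw [← hf0, List.getD_map]

lemma LexLe_iff_OLex {f : Word → Ordinal} (hf0 : f [] = 0) {N M : List Word}
    (hr : ∀ x y, (x ∈ N ∨ x = []) → (y ∈ M ∨ y = []) →
      (Wle x y ↔ f x ≤ f y) ∧ (Wle y x ↔ f y ≤ f x)) :
    LexLe Wle N M ↔ OLex (N.map f) (M.map f) := by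
  have hgN := getD_map_zero hf0 N
  have hgM := getD_map_zero hf0 M
  have hmem : ∀ i, (N.getD i [] ∈ N ∨ N.getD i [] = []) ∧ (M.getD i [] ∈ M ∨ M.getD i [] = []) :=
    fun i => ⟨getD_mem_or_eq_nil N i, getD_mem_or_eq_nil M i⟩
  unfold LexLe OLex
  simp only [List.length_map, hgN, hgM]
  constructor
  · rintro (⟨h1, h2⟩ | ⟨s, hs1, hs2, hpre, hlt, hnle⟩)
    · refine Or.inl ⟨h1, fun i hi => ?_⟩
      obtain ⟨e1, e2⟩ := h2 i hi
      obtain ⟨c1, c2⟩ := hr _ _ (hmem i).1 (hmem i).2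
      exact le_antisymm (c1.1 e1) (c2.1 e2)
    · refine Or.inr ⟨s, hs1, hs2, fun i hi => ?_, ?_⟩
      · obtain ⟨e1, e2⟩ := hpre i hi
        obtain ⟨c1, c2⟩ := hr _ _ (hmem i).1 (hmem i).2
        exact le_antisymm (c1.1 e1) (c2.1 e2)
      · obtain ⟨c1, c2⟩ := hr _ _ (hmem s).1 (hmem s).2
        exact lt_of_le_not_ge (c1.1 hlt) (fun hc => hnle (c2.2 hc))
  · rintro (⟨h1, h2⟩ | ⟨s, hs1, hs2, hpre, hlt⟩)
    · refine Or.inl ⟨h1, fun i hi => ?_⟩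
      obtain ⟨c1, c2⟩ := hr _ _ (hmem i).1 (hmem i).2
      exact ⟨c1.2 (le_of_eq (h2 i hi)), c2.2 (le_of_eq (h2 i hi).symm)⟩
    · refine Or.inr ⟨s, hs1, hs2, fun i hi => ?_, ?_, ?_⟩
      · obtain ⟨c1, c2⟩ := hr _ _ (hmem i).1 (hmem i).2
        exact ⟨c1.2 (le_of_eq (hpre i hi)), c2.2 (le_of_eq (hpre i hi).symm)⟩
      · exact (hr _ _ (hmem s).1 (hmem s).2).1.2 hlt.le
      · intro hc
        exact absurd ((hr _ _ (hmem s).1 (hmem s).2).2.1 hc) (not_le.2 hlt)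

lemma isLexMax_self {f : Word → Ordinal} (hf0 : f [] = 0) {xs : List Word}
    (hr : ∀ x y, (x ∈ xs ∨ x = []) → (y ∈ xs ∨ y = []) →
      (Wle x y ↔ f x ≤ f y) ∧ (Wle y x ↔ f y ≤ f x))
    (hNI : NI (xs.map f)) : IsLexMax Wle xs xs := by
  refine ⟨List.Sublist.refl xs, fun N hN => ?_⟩
  have hrN : ∀ x y, (x ∈ N ∨ x = []) → (y ∈ xs ∨ y = []) →
      (Wle x y ↔ f x ≤ f y) ∧ (Wle y x ↔ f y ≤ f x) := by
    intro x y hx hy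
    refine hr x y ?_ hy
    rcases hx with hx | hx; exacts [Or.inl (hN.subset hx), Or.inr hx]
  rw [LexLe_iff_OLex hf0 hrN]
  have hNN : NI (N.map f) := hNI.sublist (hN.map f)
  rw [OLex_iff_wsum hNN hNI]
  exact le_wsum_of_sublist (hN.map f)

lemma isLexMax_unique {f : Word → Ordinal} (hf0 : f [] = 0) {xs M : List Word}
    (hr : ∀ x y, (x ∈ xs ∨ x = []) → (y ∈ xs ∨ y = []) →
      (Wle x y ↔ f x ≤ f y) ∧ (Wle y x ↔ f y ≤ f x))
    (hNI : NI (xs.map f)) (hM : IsLexMax Wle xs M) : M = xs := by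
  obtain ⟨hsub, hall⟩ := hM
  have hle := hall xs (List.Sublist.refl xs)
  have hrN : ∀ x y, (x ∈ xs ∨ x = []) → (y ∈ M ∨ y = []) →
      (Wle x y ↔ f x ≤ f y) ∧ (Wle y x ↔ f y ≤ f x) := by
    intro x y hx hy
    refine hr x y hx ?_
    rcases hy with hy | hy; exacts [Or.inl (hsub.subset hy), Or.inr hy]
  rw [LexLe_iff_OLex hf0 hrN] at hle
  have hNM : NI (M.map f) := hNI.sublist (hsub.map f)
  rw [OLex_iff_wsum hNI hNM] at hle
  have hlen : M.length = xs.length := by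
    by_contra hc
    have hlt : M.length < xs.length :=
      lt_of_le_of_ne (List.Sublist.length_le hsub) hc
    have := wsum_lt_of_sublist (hsub.map f) hNI (by simpa using hlt)
    exact absurd hle (not_le.2 this)
  exact List.Sublist.eq_of_length hsub hlen

lemma Wle_iff_blocks {A B : Word} {m : ℕ} (hm : (A ++ B).min? = some m) :
    Wle A B ↔ ∀ MA MB, IsLexMax Wle (A.splitOn m) MA → IsLexMax Wle (B.splitOn m) MB →
      LexLe Wle MA MB := by
  have hmem : m ∈ A ++ B := (nat_min?_eq_some_iff.1 hm).1
  have hne : ¬(A = [] ∧ B = []) := by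
    rintro ⟨rfl, rfl⟩
    simp at hmem
  rw [Wle_iff_leAux (f := (A ++ B).toFinset.card + 1) (by omega)]
  simp only [leAux]
  have hconv : ∀ x y : Word, (x ∈ A.splitOn m ∨ x ∈ B.splitOn m ∨ x = []) →
      (y ∈ A.splitOn m ∨ y ∈ B.splitOn m ∨ y = []) →
      (leAux ((A ++ B).toFinset.card) x y ↔ Wle x y) := by
    intro x y hx hy
    have hcard := block_cond hmem hx hy
    exact ((Wle_iff_leAux (f := (A ++ B).toFinset.card) hcard)).symm
  constructor
  · rintro (h | H)
    · exact absurd h hne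
    · intro MA MB hMA hMB
      have hMA' : IsLexMax (leAux ((A ++ B).toFinset.card)) (A.splitOn m) MA := by
        rw [IsLexMax_congr (fun x y hx hy => hconv x y ?_ ?_)]
        exact hMA
        · rcases hx with hx | hx; exacts [Or.inl hx, Or.inr (Or.inr hx)]
        · rcases hy with hy | hy; exacts [Or.inl hy, Or.inr (Or.inr hy)]
      have hMB' : IsLexMax (leAux ((A ++ B).toFinset.card)) (B.splitOn m) MB := by
        rw [IsLexMax_congr (fun x y hx hy => hconv x y ?_ ?_)]
        exact hMB
        · rcases hx with hx | hx; exacts [Or.inr (Or.inl hx), Or.inr (Or.inr hx)]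
        · rcases hy with hy | hy; exacts [Or.inr (Or.inl hy), Or.inr (Or.inr hy)]
      have := H m hm MA MB hMA' hMB'
      rwa [LexLe_congr (fun x y hx hy => ?_)] at this
      have hx' : x ∈ A.splitOn m ∨ x ∈ B.splitOn m ∨ x = [] := by
        rcases hx with hx | hx
        · exact Or.inl (hMA'.1.subset hx)
        · exact Or.inr (Or.inr hx)
      have hy' : y ∈ A.splitOn m ∨ y ∈ B.splitOn m ∨ y = [] := by
        rcases hy with hy | hy
        · exact Or.inr (Or.inl (hMB'.1.subset hy))
        · exact Or.inr (Or.inr hy)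
      exact ⟨hconv x y hx' hy', hconv y x hy' hx'⟩
  · intro H
    refine Or.inr (fun m' hm' MA MB hMA hMB => ?_)
    have : m = m' := by rw [hm] at hm'; exact Option.some_inj.1 hm'
    subst this
    have hMA' : IsLexMax Wle (A.splitOn m) MA := by
      rw [← IsLexMax_congr (fun x y hx hy => hconv x y ?_ ?_)]
      exact hMA
      · rcases hx with hx | hx; exacts [Or.inl hx, Or.inr (Or.inr hx)]
      · rcases hy with hy | hy; exacts [Or.inl hy, Or.inr (Or.inr hy)]
    have hMB' : IsLexMax Wle (B.splitOn m) MB := by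
      rw [← IsLexMax_congr (fun x y hx hy => hconv x y ?_ ?_)]
      exact hMB
      · rcases hx with hx | hx; exacts [Or.inr (Or.inl hx), Or.inr (Or.inr hx)]
      · rcases hy with hy | hy; exacts [Or.inr (Or.inl hy), Or.inr (Or.inr hy)]
    have := H MA MB hMA' hMB'
    rwa [LexLe_congr (fun x y hx hy => ?_)]
    have hx' : x ∈ A.splitOn m ∨ x ∈ B.splitOn m ∨ x = [] := by
      rcases hx with hx | hx
      · exact Or.inl (hMA'.1.subset hx)
      · exact Or.inr (Or.inr hx)
    have hy' : y ∈ A.splitOn m ∨ y ∈ B.splitOn m ∨ y = [] := by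
      rcases hy with hy | hy
      · exact Or.inr (Or.inl (hMB'.1.subset hy))
      · exact Or.inr (Or.inr hy)
    exact ⟨hconv x y hx' hy', hconv y x hy' hx'⟩

end SectD

section SectE
open List Ordinal

lemma mem_splitOn_of_mem {m x : ℕ} : ∀ (A : Word), x ∈ A → x ≠ m →
    ∃ b ∈ A.splitOn m, x ∈ b := by
  refine list_len_ind (fun A ih => ?_)
  intro hx hxm
  rcases splitOn_cases m A with ⟨hm, hs⟩ | ⟨A₁, A₂, rfl, hm, hs⟩
  · exact ⟨A, by rw [hs]; simp, hx⟩
  · rw [hs]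
    rcases List.mem_append.1 hx with h1 | h1
    · exact ⟨A₁, by simp, h1⟩
    · rcases List.mem_cons.1 h1 with rfl | h1
      · exact absurd rfl hxm
      · obtain ⟨b, hb1, hb2⟩ := ih A₂ (by simp; omega) h1 hxm
        exact ⟨b, by simp [hb1], hb2⟩

lemma wsum_replicate_zero (j : ℕ) : wsum (List.replicate j 0) = j := by
  induction j with
  | zero => simp
  | succ j ih =>
    rw [List.replicate_succ, wsum_cons, ih]
    rw [opow_zero, ← Nat.cast_one, ← Nat.cast_add, Nat.add_comm]

lemma main_le : ∀ c n (A B : Word), (A ++ B).toFinset.card ≤ c →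
    (∀ x ∈ A, n ≤ x) → (∀ x ∈ B, n ≤ x) → InNF A → InNF B →
    (Wle A B ↔ oW.{u} n A ≤ oW.{u} n B) := by
  intro c
  induction c using Nat.strong_induction_on with
  | _ c IH =>
  intro n A B hcard hSA hSB hNA hNB
  by_cases hAB : A = [] ∧ B = []
  · obtain ⟨rfl, rfl⟩ := hAB
    have : Wle ([] : Word) [] := Or.inl ⟨rfl, rfl⟩
    simp [oW_nil, this]
  -- extract the minimum m
  obtain ⟨m, hm⟩ : ∃ m, (A ++ B).min? = some m := by
    rcases h : (A ++ B).min? with _ | m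
    · rw [List.min?_eq_none_iff] at h
      rcases List.append_eq_nil_iff.1 h with ⟨h1, h2⟩
      exact absurd ⟨h1, h2⟩ hAB
    · exact ⟨m, rfl⟩
  obtain ⟨hmem, hmin⟩ := nat_min?_eq_some_iff.1 hm
  have hnm : n ≤ m := by
    rcases List.mem_append.1 hmem with h | h
    · exact hSA m h
    · exact hSB m h
  have hSA' : ∀ x ∈ A, m ≤ x := fun x hx => hmin x (List.mem_append.2 (Or.inl hx))
  have hSB' : ∀ x ∈ B, m ≤ x := fun x hx => hmin x (List.mem_append.2 (Or.inr hx))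
  set f : Word → Ordinal.{u} := oW.{u} (m+1) with hf
  have hf0 : f [] = 0 := oW_nil (m+1)
  set PA := A.splitOn m with hPA
  set PB := B.splitOn m with hPB
  -- properties of blocks
  have hSblk : ∀ z : Word, (z ∈ PA ∨ z ∈ PB ∨ z = []) → ∀ x ∈ z, m + 1 ≤ x := by
    rintro z (hz | hz | rfl) x hx
    · have := mem_of_mem_splitOn A z hz x hx
      have := hSA' x this.1
      have := (mem_of_mem_splitOn A z hz x hx).2
      omega
    · have := mem_of_mem_splitOn B z hz x hx
      have := hSB' x this.1
      have := (mem_of_mem_splitOn B z hz x hx).2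
      omega
    · simp at hx
  have hNFblkA : ∀ z ∈ PA, InNF z := by
    intro z hz
    by_cases hmA : m ∈ A
    · have hminA : A.min? = some m := nat_min?_eq_some_iff.2 ⟨hmA, hSA'⟩
      have hAne : A ≠ [] := by rintro rfl; simp at hmA
      exact ((InNF_iff_blocks hAne hminA).1 hNA).2 z hz
    · rw [hPA, splitOn_of_not_mem hmA] at hz
      simp at hz
      subst hz
      exact hNA
  have hNFblkB : ∀ z ∈ PB, InNF z := by
    intro z hz
    by_cases hmB : m ∈ B
    · have hminB : B.min? = some m := nat_min?_eq_some_iff.2 ⟨hmB, hSB'⟩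
      have hBne : B ≠ [] := by rintro rfl; simp at hmB
      exact ((InNF_iff_blocks hBne hminB).1 hNB).2 z hz
    · rw [hPB, splitOn_of_not_mem hmB] at hz
      simp at hz
      subst hz
      exact hNB
  have hNFblk : ∀ z : Word, (z ∈ PA ∨ z ∈ PB ∨ z = []) → InNF z := by
    rintro z (hz | hz | rfl)
    · exact hNFblkA z hz
    · exact hNFblkB z hz
    · exact InNF_nil
  have hrIff : ∀ x y : Word, (x ∈ PA ∨ x ∈ PB ∨ x = []) → (y ∈ PA ∨ y ∈ PB ∨ y = []) →
      (Wle x y ↔ f x ≤ f y) := by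
    intro x y hx hy
    have hcard' : (x ++ y).toFinset.card < c :=
      lt_of_lt_of_le (block_cond hmem hx hy) hcard
    exact IH _ hcard' (m+1) x y le_rfl
      (fun z hz => hSblk x ‹_› z hz) (fun z hz => hSblk y ‹_› z hz)
      (hNFblk x hx) (hNFblk y hy)
  have hchainA : PA.Chain' (fun x y => Wle y x) := by
    by_cases hmA : m ∈ A
    · have hminA : A.min? = some m := nat_min?_eq_some_iff.2 ⟨hmA, hSA'⟩
      have hAne : A ≠ [] := by rintro rfl; simp at hmA
      exact ((InNF_iff_blocks hAne hminA).1 hNA).1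
    · rw [hPA, splitOn_of_not_mem hmA]
      exact List.isChain_singleton _
  have hchainB : PB.Chain' (fun x y => Wle y x) := by
    by_cases hmB : m ∈ B
    · have hminB : B.min? = some m := nat_min?_eq_some_iff.2 ⟨hmB, hSB'⟩
      have hBne : B ≠ [] := by rintro rfl; simp at hmB
      exact ((InNF_iff_blocks hBne hminB).1 hNB).1
    · rw [hPB, splitOn_of_not_mem hmB]
      exact List.isChain_singleton _
  haveI : IsTrans Ordinal.{u} (fun a b => b ≤ a) := ⟨fun a b c h1 h2 => le_trans h2 h1⟩
  have hNIA : NI (PA.map f) := by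
    rw [NI, ← List.isChain_iff_pairwise]
    rw [List.isChain_map]
    rw [List.isChain_iff_getElem]
    simp only [List.Chain', List.isChain_iff_getElem] at hchainA
    intro i hi
    have h1 := hchainA i hi
    have e1 : PA.get ⟨i, by omega⟩ ∈ PA := List.get_mem _ _
    have e2 : PA.get ⟨i+1, by omega⟩ ∈ PA := List.get_mem _ _
    exact (hrIff _ _ (Or.inl e2) (Or.inl e1)).1 h1
  have hNIB : NI (PB.map f) := by
    rw [NI, ← List.isChain_iff_pairwise]
    rw [List.isChain_map]
    rw [List.isChain_iff_getElem]
    simp only [List.Chain', List.isChain_iff_getElem] at hchainB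
    intro i hi
    have h1 := hchainB i hi
    have e1 : PB.get ⟨i, by omega⟩ ∈ PB := List.get_mem _ _
    have e2 : PB.get ⟨i+1, by omega⟩ ∈ PB := List.get_mem _ _
    exact (hrIff _ _ (Or.inr (Or.inl e2)) (Or.inr (Or.inl e1))).1 h1
  have hrA : ∀ x y : Word, (x ∈ PA ∨ x = []) → (y ∈ PA ∨ y = []) →
      (Wle x y ↔ f x ≤ f y) ∧ (Wle y x ↔ f y ≤ f x) := by
    intro x y hx hy
    have hx' : x ∈ PA ∨ x ∈ PB ∨ x = [] := by
      rcases hx with h | h; exacts [Or.inl h, Or.inr (Or.inr h)]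
    have hy' : y ∈ PA ∨ y ∈ PB ∨ y = [] := by
      rcases hy with h | h; exacts [Or.inl h, Or.inr (Or.inr h)]
    exact ⟨hrIff x y hx' hy', hrIff y x hy' hx'⟩
  have hrB : ∀ x y : Word, (x ∈ PB ∨ x = []) → (y ∈ PB ∨ y = []) →
      (Wle x y ↔ f x ≤ f y) ∧ (Wle y x ↔ f y ≤ f x) := by
    intro x y hx hy
    have hx' : x ∈ PA ∨ x ∈ PB ∨ x = [] := by
      rcases hx with h | h; exacts [Or.inr (Or.inl h), Or.inr (Or.inr h)]
    have hy' : y ∈ PA ∨ y ∈ PB ∨ y = [] := by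
      rcases hy with h | h; exacts [Or.inr (Or.inl h), Or.inr (Or.inr h)]
    exact ⟨hrIff x y hx' hy', hrIff y x hy' hx'⟩
  -- Step: Wle A B ↔ wsum comparison
  have hstep : Wle A B ↔ wsum (PA.map f) ≤ wsum (PB.map f) := by
    rw [Wle_iff_blocks hm]
    constructor
    · intro H
      have := H PA PB (isLexMax_self hf0 hrA hNIA) (isLexMax_self hf0 hrB hNIB)
      have hrAB : ∀ x y : Word, (x ∈ PA ∨ x = []) → (y ∈ PB ∨ y = []) →
          (Wle x y ↔ f x ≤ f y) ∧ (Wle y x ↔ f y ≤ f x) := by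
        intro x y hx hy
        have hx' : x ∈ PA ∨ x ∈ PB ∨ x = [] := by
          rcases hx with h | h; exacts [Or.inl h, Or.inr (Or.inr h)]
        have hy' : y ∈ PA ∨ y ∈ PB ∨ y = [] := by
          rcases hy with h | h; exacts [Or.inr (Or.inl h), Or.inr (Or.inr h)]
        exact ⟨hrIff x y hx' hy', hrIff y x hy' hx'⟩
      rw [LexLe_iff_OLex hf0 hrAB] at this
      exact (OLex_iff_wsum hNIA hNIB).1 this
    · intro H MA MB hMA hMB
      rw [isLexMax_unique hf0 hrA hNIA hMA, isLexMax_unique hf0 hrB hNIB hMB]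
      have hrAB : ∀ x y : Word, (x ∈ PA ∨ x = []) → (y ∈ PB ∨ y = []) →
          (Wle x y ↔ f x ≤ f y) ∧ (Wle y x ↔ f y ≤ f x) := by
        intro x y hx hy
        have hx' : x ∈ PA ∨ x ∈ PB ∨ x = [] := by
          rcases hx with h | h; exacts [Or.inl h, Or.inr (Or.inr h)]
        have hy' : y ∈ PA ∨ y ∈ PB ∨ y = [] := by
          rcases hy with h | h; exacts [Or.inr (Or.inl h), Or.inr (Or.inr h)]
        exact ⟨hrIff x y hx' hy', hrIff y x hy' hx'⟩
      rw [LexLe_iff_OLex hf0 hrAB]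
      exact (OLex_iff_wsum hNIA hNIB).2 H
  -- value computations
  have hvalall : ∀ (C : Word), (∀ x ∈ C, m ≤ x) → (C.all (· = m) = true) →
      wsum ((C.splitOn m).map f) = ((C.length + 1 : ℕ) : Ordinal) := by
    intro C hSC hall
    have hrep : C = List.replicate C.length m := by
      rw [List.eq_replicate_iff]
      exact ⟨rfl, all_eq_iff.1 hall⟩
    rw [hrep, splitOn_replicate, List.map_replicate, hf0, wsum_replicate_zero]
    simp
  have homega : ∀ (C : Word), (∀ x ∈ C, m ≤ x) → InNF C → ¬ (C.all (· = m) = true) →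
      NI ((C.splitOn m).map f) → omega0 ≤ oW.{u} m C := by
    intro C hSC hNC hall hNIC
    have hCne : C ≠ [] := by rintro rfl; simp at hall
    have hSE : ∀ b ∈ C.splitOn m, ∀ x ∈ b, m + 1 ≤ x := by
      intro b hb x hx
      have h1 := mem_of_mem_splitOn C b hb x hx
      have := hSC x h1.1
      omega
    by_cases hmC : m ∈ C
    · obtain ⟨C₁, C₂, hCeq, hC1, hs⟩ : ∃ C₁ C₂, C = C₁ ++ m :: C₂ ∧ m ∉ C₁ ∧
          C.splitOn m = C₁ :: C₂.splitOn m := by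
        rcases splitOn_cases m C with ⟨h1, _⟩ | ⟨C₁, C₂, h1, h2, h3⟩
        · exact absurd hmC h1
        · exact ⟨C₁, C₂, h1, h2, h3⟩
      have hC1ne : C₁ ≠ [] := by
        rintro rfl
        apply hall
        rw [all_eq_iff]
        intro x hx
        by_contra hxm
        obtain ⟨b, hb1, hb2⟩ := mem_splitOn_of_mem _ hx hxm
        have hbne : b ≠ [] := by rintro rfl; simp at hb2
        have hbtail : b ∈ C₂.splitOn m := by
          rw [hs] at hb1
          rcases List.mem_cons.1 hb1 with rfl | h
          · exact absurd rfl hbne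
          · exact h
        rw [hs] at hNIC
        simp only [List.map_cons, hf0] at hNIC
        have hle : f b ≤ 0 := (List.pairwise_cons.1 hNIC).1 (f b)
          (List.mem_map.2 ⟨b, hbtail, rfl⟩)
        have hpos : 0 < f b := oW_pos (fun z hz => by
          have := hSE b (by rw [hs]; exact List.mem_cons_of_mem _ hbtail) z hz
          omega) hbne
        exact absurd hle (not_le.2 hpos)
      rw [oW_eq_wsum hSC hall, hs]
      simp only [List.map_cons, wsum_cons]
      have h1 : (1 : Ordinal) ≤ f C₁ := Order.one_le_iff_pos.2 (oW_pos (fun z hz =>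
        hSE C₁ (by rw [hs]; exact List.mem_cons_self) z hz) hC1ne)
      calc omega0 = omega0 ^ (1 : Ordinal) := (opow_one _).symm
        _ ≤ omega0 ^ f C₁ := Ordinal.opow_le_opow_right omega0_pos h1
        _ ≤ _ := le_self_add
    · have hSC1 : ∀ x ∈ C, m + 1 ≤ x := by
        intro x hx
        have := hSC x hx
        rcases Nat.lt_or_ge m x with h | h
        · omega
        · have : x = m := by omega
          exact absurd (this ▸ hx) hmC
      rw [oW_singleblock hSC1 hCne]
      calc omega0 = omega0 ^ (1 : Ordinal) := (opow_one _).symm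
        _ ≤ omega0 ^ oW.{u} (m+1) C := Ordinal.opow_le_opow_right omega0_pos
            (Order.one_le_iff_pos.2 (oW_pos hSC1 hCne))
  -- finish
  rw [hstep, oW_le_climb hnm hSA' hSB']
  by_cases hallA : A.all (· = m) <;> by_cases hallB : B.all (· = m)
  · rw [hvalall A hSA' hallA, hvalall B hSB' hallB, oW_all hallA, oW_all hallB]
    constructor <;> intro h
    · have := (Nat.cast_le (α := Ordinal)).1 h
      exact Nat.cast_le.2 (by omega)
    · have := (Nat.cast_le (α := Ordinal)).1 h
      exact Nat.cast_le.2 (by omega)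
  · rw [hvalall A hSA' hallA, ← oW_eq_wsum hSB' hallB, oW_all hallA]
    have hωB : omega0 ≤ oW.{u} m B := homega B hSB' hNB hallB hNIB
    constructor <;> intro _
    · exact le_trans (Ordinal.nat_lt_omega0 _).le hωB
    · exact le_trans (Ordinal.nat_lt_omega0 _).le hωB
  · rw [← oW_eq_wsum hSA' hallA, hvalall B hSB' hallB, oW_all hallB]
    have hωA : omega0 ≤ oW.{u} m A := homega A hSA' hNA hallA hNIA
    constructor <;> intro h <;> exfalso
    · exact absurd h (not_le.2 (lt_of_lt_of_le (Ordinal.nat_lt_omega0 _) hωA))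
    · exact absurd h (not_le.2 (lt_of_lt_of_le (Ordinal.nat_lt_omega0 _) hωA))
  · rw [← oW_eq_wsum hSA' hallA, ← oW_eq_wsum hSB' hallB]

end SectE

section SectF
open List Ordinal

lemma blocks_NF {n : ℕ} {A : Word} (hSA : ∀ x ∈ A, n ≤ x) (hNA : InNF A) :
    ∀ b ∈ A.splitOn n, InNF b := by
  intro b hb
  by_cases hmA : n ∈ A
  · have hminA : A.min? = some n := nat_min?_eq_some_iff.2 ⟨hmA, hSA⟩
    have hAne : A ≠ [] := by rintro rfl; simp at hmA
    exact ((InNF_iff_blocks hAne hminA).1 hNA).2 b hb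
  · rw [splitOn_of_not_mem hmA] at hb
    simp at hb
    subst hb
    exact hNA

lemma blocks_chain {n : ℕ} {A : Word} (hSA : ∀ x ∈ A, n ≤ x) (hNA : InNF A) :
    (A.splitOn n).Chain' (fun x y => Wle y x) := by
  by_cases hmA : n ∈ A
  · have hminA : A.min? = some n := nat_min?_eq_some_iff.2 ⟨hmA, hSA⟩
    have hAne : A ≠ [] := by rintro rfl; simp at hmA
    exact ((InNF_iff_blocks hAne hminA).1 hNA).1
  · rw [splitOn_of_not_mem hmA]
    exact List.isChain_singleton _

lemma blocks_S {n : ℕ} {A : Word} (hSA : ∀ x ∈ A, n ≤ x) :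
    ∀ b ∈ A.splitOn n, ∀ x ∈ b, n + 1 ≤ x := by
  intro b hb x hx
  have h1 := mem_of_mem_splitOn A b hb x hx
  have := hSA x h1.1
  omega

lemma Wle_iff_oW {n : ℕ} {A B : Word} (hSA : ∀ x ∈ A, n ≤ x) (hSB : ∀ x ∈ B, n ≤ x)
    (hNA : InNF A) (hNB : InNF B) : Wle A B ↔ oW.{u} n A ≤ oW.{u} n B :=
  main_le _ n A B le_rfl hSA hSB hNA hNB

lemma NI_blocks {n : ℕ} {A : Word} (hSA : ∀ x ∈ A, n ≤ x) (hNA : InNF A) :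
    NI ((A.splitOn n).map (oW.{u} (n+1))) := by
  haveI : IsTrans Ordinal.{u} (fun a b => b ≤ a) := ⟨fun a b c h1 h2 => le_trans h2 h1⟩
  have hchain := blocks_chain hSA hNA
  rw [NI, ← List.isChain_iff_pairwise, List.isChain_map]
  rw [List.isChain_iff_getElem]
  simp only [List.Chain', List.isChain_iff_getElem] at hchain
  intro i hi
  have h1 := hchain i hi
  have e1 : (A.splitOn n).get ⟨i, by omega⟩ ∈ A.splitOn n := List.get_mem _ _
  have e2 : (A.splitOn n).get ⟨i+1, by omega⟩ ∈ A.splitOn n := List.get_mem _ _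
  exact (Wle_iff_oW (blocks_S hSA _ e2) (blocks_S hSA _ e1)
    (blocks_NF hSA hNA _ e2) (blocks_NF hSA hNA _ e1)).1 h1

lemma omega_le_oW {m : ℕ} {C : Word} (hSC : ∀ x ∈ C, m ≤ x) (hNC : InNF C)
    (hall : ¬ (C.all (· = m) = true)) : omega0 ≤ oW.{u} m C := by
  have hCne : C ≠ [] := by rintro rfl; simp at hall
  have hSE := blocks_S hSC
  by_cases hmC : m ∈ C
  · obtain ⟨C₁, C₂, hCeq, hC1, hs⟩ : ∃ C₁ C₂, C = C₁ ++ m :: C₂ ∧ m ∉ C₁ ∧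
        C.splitOn m = C₁ :: C₂.splitOn m := by
      rcases splitOn_cases m C with ⟨h1, _⟩ | ⟨C₁, C₂, h1, h2, h3⟩
      · exact absurd hmC h1
      · exact ⟨C₁, C₂, h1, h2, h3⟩
    have hNIC := NI_blocks.{u} hSC hNC
    have hC1ne : C₁ ≠ [] := by
      rintro rfl
      apply hall
      rw [all_eq_iff]
      intro x hx
      by_contra hxm
      obtain ⟨b, hb1, hb2⟩ := mem_splitOn_of_mem _ hx hxm
      have hbne : b ≠ [] := by rintro rfl; simp at hb2
      have hbtail : b ∈ C₂.splitOn m := by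
        rw [hs] at hb1
        rcases List.mem_cons.1 hb1 with rfl | h
        · exact absurd rfl hbne
        · exact h
      rw [hs] at hNIC
      simp only [List.map_cons, oW_nil] at hNIC
      have hle : oW.{u} (m+1) b ≤ 0 := (List.pairwise_cons.1 hNIC).1 _
        (List.mem_map.2 ⟨b, hbtail, rfl⟩)
      have hpos : 0 < oW.{u} (m+1) b := oW_pos (fun z hz =>
        hSE b (by rw [hs]; exact List.mem_cons_of_mem _ hbtail) z hz) hbne
      exact absurd hle (not_le.2 hpos)
    rw [oW_eq_wsum hSC hall, hs]
    simp only [List.map_cons, wsum_cons]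
    have h1 : (1 : Ordinal) ≤ oW.{u} (m+1) C₁ := Order.one_le_iff_pos.2 (oW_pos (fun z hz =>
      hSE C₁ (by rw [hs]; exact List.mem_cons_self) z hz) hC1ne)
    calc omega0 = omega0 ^ (1 : Ordinal) := (opow_one _).symm
      _ ≤ omega0 ^ oW.{u} (m+1) C₁ := Ordinal.opow_le_opow_right omega0_pos h1
      _ ≤ _ := le_self_add
  · have hSC1 : ∀ x ∈ C, m + 1 ≤ x := by
      intro x hx
      have := hSC x hx
      rcases Nat.lt_or_ge m x with h | h
      · omega
      · have : x = m := by omega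
        exact absurd (this ▸ hx) hmC
    rw [oW_singleblock hSC1 hCne]
    calc omega0 = omega0 ^ (1 : Ordinal) := (opow_one _).symm
      _ ≤ omega0 ^ oW.{u} (m+1) C := Ordinal.opow_le_opow_right omega0_pos
          (Order.one_le_iff_pos.2 (oW_pos hSC1 hCne))

lemma oW_inj : ∀ N (n : ℕ) (A B : Word), A.length + B.length ≤ N →
    (∀ x ∈ A, n ≤ x) → (∀ x ∈ B, n ≤ x) → InNF A → InNF B →
    oW.{u} n A = oW.{u} n B → A = B := by
  intro N
  induction N using Nat.strong_induction_on with
  | _ N IH =>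
  intro n A B hN hSA hSB hNA hNB heq
  rcases eq_or_ne A [] with rfl | hAne
  · rcases eq_or_ne B [] with rfl | hBne
    · rfl
    · rw [oW_nil] at heq
      exact absurd heq.symm (ne_of_gt (oW_pos hSB hBne))
  rcases eq_or_ne B [] with rfl | hBne
  · rw [oW_nil] at heq
    exact absurd heq (ne_of_gt (oW_pos hSA hAne))
  -- both nonempty
  obtain ⟨m, hm⟩ : ∃ m, (A ++ B).min? = some m := by
    rcases h : (A ++ B).min? with _ | m
    · rw [List.min?_eq_none_iff] at h
      rcases List.append_eq_nil_iff.1 h with ⟨h1, h2⟩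
      exact absurd h1 hAne
    · exact ⟨m, rfl⟩
  obtain ⟨hmem, hmin⟩ := nat_min?_eq_some_iff.1 hm
  have hnm : n ≤ m := by
    rcases List.mem_append.1 hmem with h | h
    · exact hSA m h
    · exact hSB m h
  have hSA' : ∀ x ∈ A, m ≤ x := fun x hx => hmin x (List.mem_append.2 (Or.inl hx))
  have hSB' : ∀ x ∈ B, m ≤ x := fun x hx => hmin x (List.mem_append.2 (Or.inr hx))
  rw [oW_eq_climb hnm hSA' hSB'] at heq
  by_cases hallA : A.all (· = m) <;> by_cases hallB : B.all (· = m)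
  · rw [oW_all hallA, oW_all hallB, Nat.cast_inj] at heq
    rw [List.eq_replicate_iff.2 ⟨rfl, all_eq_iff.1 hallA⟩,
        List.eq_replicate_iff.2 ⟨rfl, all_eq_iff.1 hallB⟩, heq]
  · rw [oW_all hallA] at heq
    have := omega_le_oW.{u} hSB' hNB hallB
    exact absurd (heq ▸ this) (not_le.2 (Ordinal.nat_lt_omega0 _))
  · rw [oW_all hallB] at heq
    have := omega_le_oW.{u} hSA' hNA hallA
    exact absurd (heq.symm ▸ this) (not_le.2 (Ordinal.nat_lt_omega0 _))
  · rw [oW_eq_wsum hSA' hallA, oW_eq_wsum hSB' hallB] at heq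
    have hmaps := wsum_inj (NI_blocks.{u} hSA' hNA) (NI_blocks.{u} hSB' hNB) heq
    have hlen : (A.splitOn m).length = (B.splitOn m).length := by
      have := congrArg List.length hmaps
      simpa using this
    have hblocks : A.splitOn m = B.splitOn m := by
      apply List.ext_getElem hlen
      intro i h1 h2
      have hfeq : oW.{u} (m+1) (A.splitOn m)[i] = oW.{u} (m+1) (B.splitOn m)[i] := by
        have := congrArg (fun l => l.getD i 0) hmaps
        simpa [List.getD_eq_getElem, h1, h2] using this
      have e1 : (A.splitOn m)[i] ∈ A.splitOn m := List.getElem_mem _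
      have e2 : (B.splitOn m)[i] ∈ B.splitOn m := List.getElem_mem _
      have hlenbound : (A.splitOn m)[i].length + (B.splitOn m)[i].length < N := by
        have l1 := length_le_of_mem_splitOn A _ e1
        have l2 := length_le_of_mem_splitOn B _ e2
        rcases List.mem_append.1 hmem with h | h
        · have := length_lt_of_mem_splitOn h _ e1
          have hBpos : 0 < B.length := List.length_pos_iff.2 hBne
          omega
        · have := length_lt_of_mem_splitOn h _ e2
          have hApos : 0 < A.length := List.length_pos_iff.2 hAne
          omega
      exact IH _ hlenbound (m+1) _ _ le_rfl (blocks_S hSA' _ e1) (blocks_S hSB' _ e2)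
        (blocks_NF hSA' hNA _ e1) (blocks_NF hSB' hNB _ e2) hfeq
    have : [m].intercalate (A.splitOn m) = [m].intercalate (B.splitOn m) := by rw [hblocks]
    rwa [List.intercalate_splitOn, List.intercalate_splitOn] at this

lemma one_le_omegaTower : ∀ k, (1 : Ordinal) ≤ omegaTower.{u} k := by
  intro k
  cases k with
  | zero => exact le_rfl
  | succ k =>
    show (1 : Ordinal) ≤ omega0 ^ omegaTower k
    rw [← opow_zero omega0]
    exact Ordinal.opow_le_opow_right omega0_pos zero_le

lemma omega0_le_omegaTower : ∀ k, 1 ≤ k → omega0 ≤ omegaTower.{u} k := by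
  intro k hk
  rcases Nat.exists_eq_add_of_le hk with ⟨j, rfl⟩
  rw [Nat.add_comm]
  show omega0 ≤ omega0 ^ omegaTower j
  calc omega0 = omega0 ^ (1:Ordinal) := (opow_one _).symm
    _ ≤ _ := Ordinal.opow_le_opow_right omega0_pos (one_le_omegaTower _)

lemma oW_lt_tower : ∀ k n (A : Word), (∀ c ∈ A, n ≤ c) → (∀ c ∈ A, c ≤ n + k) → InNF A →
    oW.{u} n A < omegaTower.{u} (k+1) := by
  intro k
  induction k with
  | zero =>
    intro n A hS hU _
    have hall : A.all (· = n) = true := all_eq_iff.2 (fun c hc => by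
      have := hS c hc; have := hU c hc; omega)
    rw [oW_all hall]
    show (A.length : Ordinal) < omega0 ^ omegaTower 0
    rw [show omegaTower.{u} 0 = 1 from rfl, opow_one]
    exact Ordinal.nat_lt_omega0 _
  | succ k ih =>
    intro n A hS hU hNF
    by_cases hall : A.all (· = n)
    · rw [oW_all hall]
      exact lt_of_lt_of_le (Ordinal.nat_lt_omega0 _) (omega0_le_omegaTower _ (by omega))
    · rw [oW_eq_wsum hS hall]
      show _ < omega0 ^ omegaTower (k+1)
      apply wsum_lt_opow
      intro a ha
      obtain ⟨b, hb, rfl⟩ := List.mem_map.1 ha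
      exact ih (n+1) b (blocks_S hS _ hb) (fun c hc => by
        have := (mem_of_mem_splitOn A b hb c hc).1
        have := hU c this
        omega) (blocks_NF hS hNF _ hb)

end SectF

section SectG
open List Ordinal

lemma lt_opow_add_self {x e : Ordinal.{u}} (h : x < omega0 ^ (e + 1)) :
    x < omega0 ^ e + x := by
  rcases lt_or_ge x (omega0 ^ e + x) with h' | h'
  · exact h'
  · exfalso
    have heq : omega0 ^ e + x = x := le_antisymm h' (le_add_self)
    have h2 := Ordinal.add_eq_right_iff_mul_omega0_le.1 heq
    rw [Ordinal.add_one_eq_succ, opow_succ] at h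
    exact absurd h2 (not_le.2 h)

lemma chain'_Wle_replicate_nil (j : ℕ) :
    List.Chain' (fun x y : Word => Wle y x) (List.replicate j ([] : Word)) := by
  induction j with
  | zero => exact List.IsChain.nil
  | succ j ih =>
    rcases j with _ | j
    · exact List.isChain_singleton _
    · rw [List.replicate_succ, List.replicate_succ]
      simp only [List.Chain', List.isChain_cons_cons]
      constructor
      · exact Or.inl ⟨rfl, rfl⟩
      · rw [← List.replicate_succ]
        exact ih

lemma InNF_replicate (j n : ℕ) : InNF (List.replicate j n) := by
  rcases Nat.eq_zero_or_pos j with rfl | hj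
  · exact InNF_nil
  have hne : List.replicate j n ≠ [] := by
    intro h
    have := congrArg List.length h
    simp at this
    omega
  have hmin : (List.replicate j n).min? = some n := by
    apply nat_min?_eq_some_iff.2
    constructor
    · exact List.mem_replicate.2 ⟨by omega, rfl⟩
    · intro x hx
      rw [List.eq_of_mem_replicate hx]
  rw [InNF_iff_blocks hne hmin, splitOn_replicate]
  constructor
  · exact chain'_Wle_replicate_nil _
  · intro b hb
    rw [List.eq_of_mem_replicate hb]
    exact InNF_nil

lemma Wle_nil_left {z : Word} (hN : InNF z) : Wle [] z := by
  rw [Wle_iff_oW.{0} (n := 0) (by simp) (by simp) InNF_nil hN, oW_nil]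
  exact zero_le

lemma oW_replicate (j n : ℕ) : oW.{u} n (List.replicate j n) = j := by
  rw [oW_all (all_eq_iff.2 (fun c hc => List.eq_of_mem_replicate hc))]
  simp

lemma oW_surj : ∀ k n (β : Ordinal.{u}), β < omegaTower.{u} (k+1) →
    ∃ A : Word, (∀ c ∈ A, n ≤ c) ∧ (∀ c ∈ A, c ≤ n + k) ∧ InNF A ∧ oW.{u} n A = β := by
  intro k
  induction k with
  | zero =>
    intro n β hβ
    have hω : β < omega0 := by
      have : omegaTower.{u} 1 = omega0 := by
        show omega0 ^ omegaTower.{u} 0 = omega0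
        rw [show omegaTower.{u} 0 = 1 from rfl, opow_one]
      rwa [this] at hβ
    obtain ⟨j, rfl⟩ := lt_omega0.1 hω
    exact ⟨List.replicate j n, fun c hc => le_of_eq (List.eq_of_mem_replicate hc).symm,
      fun c hc => by rw [List.eq_of_mem_replicate hc]; omega, InNF_replicate j n,
      oW_replicate j n⟩
  | succ k ih =>
    intro n β hβtop
    rcases lt_or_ge β omega0 with hsm | hbig0
    · obtain ⟨j, rfl⟩ := lt_omega0.1 hsm
      exact ⟨List.replicate j n, fun c hc => le_of_eq (List.eq_of_mem_replicate hc).symm,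
        fun c hc => by rw [List.eq_of_mem_replicate hc]; omega, InNF_replicate j n,
        oW_replicate j n⟩
    have aux : ∀ β : Ordinal.{u}, omega0 ≤ β → β < omegaTower.{u} (k+2) →
        ∃ A : Word, (∀ c ∈ A, n ≤ c) ∧ (∀ c ∈ A, c ≤ n + (k+1)) ∧ InNF A ∧ oW.{u} n A = β := by
      clear hβtop hbig0
      intro β
      induction β using Ordinal.induction with
      | h β IHβ =>
      intro hbig hβ
      have hβ0 : β ≠ 0 := ne_of_gt (lt_of_lt_of_le omega0_pos hbig)
      set e := Ordinal.log omega0 β with he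
      have hween : omega0 ^ e ≤ β := Ordinal.opow_log_le_self _ hβ0
      have he1 : (1 : Ordinal) ≤ e := by
        rw [he, ← Ordinal.opow_le_iff_le_log one_lt_omega0 hβ0, opow_one]
        exact hbig
      have hek : e < omegaTower.{u} (k+1) := by
        have h2 : omegaTower.{u} (k+2) = omega0 ^ omegaTower.{u} (k+1) := rfl
        rw [h2] at hβ
        exact (Ordinal.lt_opow_iff_log_lt one_lt_omega0 hβ0).1 hβ
      obtain ⟨w, hwS, hwU, hwNF, hwval⟩ := ih (n+1) e hek
      have hwne : w ≠ [] := by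
        rintro rfl
        rw [oW_nil] at hwval
        rw [← hwval] at he1
        exact absurd he1 (by simp)
      have hnw : n ∉ w := fun hc => by have := hwS n hc; omega
      set β' := β - omega0 ^ e with hβ'def
      have hsum : omega0 ^ e + β' = β := Ordinal.add_sub_cancel_of_le hween
      have hβ'β : β' < β := by
        have h1 : β < omega0 ^ (e + 1) := by
          have := Ordinal.lt_opow_succ_log_self one_lt_omega0 β
          rwa [← Ordinal.add_one_eq_succ, ← he] at this
        have h2 : β' < omega0 ^ (e + 1) := lt_of_le_of_lt (Ordinal.sub_le_self _ _) h1
        calc β' < omega0 ^ e + β' := lt_opow_add_self h2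
          _ = β := hsum
      rcases eq_or_ne β' 0 with hz | hnz
      · refine ⟨w, fun c hc => by have := hwS c hc; omega,
          fun c hc => by have := hwU c hc; omega, hwNF, ?_⟩
        rw [oW_singleblock hwS hwne, hwval, ← hsum, hz, add_zero]
      -- we will need the first symbol of w to show ¬ all = n
      obtain ⟨x0, hx0⟩ := List.exists_mem_of_ne_nil w hwne
      have hx0n : n + 1 ≤ x0 := hwS x0 hx0
      rcases lt_or_ge β' omega0 with hsmall | hbig'
      · -- tail is replicate (j-1) n
        obtain ⟨j, hj⟩ := lt_omega0.1 hsmall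
        have hjpos : 0 < j := by
          rcases Nat.eq_zero_or_pos j with rfl | h
          · rw [hj] at hnz; simp at hnz
          · exact h
        obtain ⟨jj, rfl⟩ : ∃ jj, j = jj + 1 := ⟨j - 1, by omega⟩
        set T : Word := List.replicate jj n with hT
        set A : Word := w ++ n :: T with hA
        have hsplit : A.splitOn n = w :: List.replicate (jj + 1) ([] : Word) := by
          rw [hA, splitOn_first' hnw, hT, splitOn_replicate]
        have hSA : ∀ c ∈ A, n ≤ c := by
          intro c hc
          rw [hA] at hc
          rcases List.mem_append.1 hc with h | h
          · have := hwS c h; omega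
          · rcases List.mem_cons.1 h with rfl | h
            · omega
            · rw [List.eq_of_mem_replicate h]
        have hUA : ∀ c ∈ A, c ≤ n + (k+1) := by
          intro c hc
          rw [hA] at hc
          rcases List.mem_append.1 hc with h | h
          · have := hwU c h; omega
          · rcases List.mem_cons.1 h with rfl | h
            · omega
            · rw [List.eq_of_mem_replicate h]; omega
        have hAne : A ≠ [] := by rw [hA]; simp
        have hminA : A.min? = some n := nat_min?_eq_some_iff.2
          ⟨by rw [hA]; exact List.mem_append.2 (Or.inr (List.mem_cons_self)), hSA⟩
        have hNFA : InNF A := by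
          rw [InNF_iff_blocks hAne hminA, hsplit]
          constructor
          · simp only [List.Chain', List.isChain_cons]
            constructor
            · intro y hy
              rw [List.replicate_succ] at hy
              simp at hy
              rw [hy]
              exact Wle_nil_left hwNF
            · exact chain'_Wle_replicate_nil _
          · intro b hb
            rcases List.mem_cons.1 hb with rfl | hb
            · exact hwNF
            · rw [List.eq_of_mem_replicate hb]
              exact InNF_nil
        have hallA : ¬ (A.all (· = n) = true) := by
          rw [all_eq_iff]
          intro hc
          have := hc x0 (by rw [hA]; exact List.mem_append.2 (Or.inl hx0))
          omega
        refine ⟨A, hSA, hUA, hNFA, ?_⟩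
        rw [oW_eq_wsum hSA hallA, hsplit]
        simp only [List.map_cons, wsum_cons, List.map_replicate, oW_nil]
        rw [wsum_replicate_zero, hwval, ← hsum, hj]
      · -- tail is a recursively obtained word A'
        obtain ⟨A', hS', hU', hNF', hval'⟩ := IHβ β' hβ'β hbig' (lt_trans hβ'β hβ)
        have hall' : ¬ (A'.all (· = n) = true) := by
          rw [all_eq_iff]
          intro hc
          have hrep : A' = List.replicate A'.length n :=
            List.eq_replicate_iff.2 ⟨rfl, hc⟩
          rw [hrep, oW_replicate] at hval'
          rw [← hval'] at hbig'
          exact absurd hbig' (not_le.2 (Ordinal.nat_lt_omega0 _))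
        have hA'ne : A' ≠ [] := by
          rintro rfl
          simp at hall'
        set A : Word := w ++ n :: A' with hA
        have hsplit : A.splitOn n = w :: A'.splitOn n := by
          rw [hA, splitOn_first' hnw]
        have hSA : ∀ c ∈ A, n ≤ c := by
          intro c hc
          rw [hA] at hc
          rcases List.mem_append.1 hc with h | h
          · have := hwS c h; omega
          · rcases List.mem_cons.1 h with rfl | h
            · omega
            · exact hS' c h
        have hUA : ∀ c ∈ A, c ≤ n + (k+1) := by
          intro c hc
          rw [hA] at hc
          rcases List.mem_append.1 hc with h | h
          · have := hwU c h; omega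
          · rcases List.mem_cons.1 h with rfl | h
            · omega
            · exact hU' c h
        have hAne : A ≠ [] := by rw [hA]; simp
        have hminA : A.min? = some n := nat_min?_eq_some_iff.2
          ⟨by rw [hA]; exact List.mem_append.2 (Or.inr (List.mem_cons_self)), hSA⟩
        have hval'wsum : wsum ((A'.splitOn n).map (oW.{u} (n+1))) = β' := by
          rw [← oW_eq_wsum hS' hall', hval']
        have hNFA : InNF A := by
          rw [InNF_iff_blocks hAne hminA, hsplit]
          constructor
          · simp only [List.Chain', List.isChain_cons]
            constructor
            · intro y hy
              have hymem : y ∈ A'.splitOn n := List.mem_of_mem_head? hy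
              -- Wle y w via oW comparison at level n+1
              rw [Wle_iff_oW (blocks_S hS' _ hymem) hwS (blocks_NF hS' hNF' _ hymem) hwNF,
                hwval]
              -- oW (n+1) y ≤ e since ω ^ oW (n+1) y ≤ β
              have hyle : omega0 ^ oW.{u} (n+1) y ≤ β := by
                have h1 : omega0 ^ oW.{u} (n+1) y ≤ wsum ((A'.splitOn n).map (oW.{u} (n+1))) := by
                  have hsub : [oW.{u} (n+1) y].Sublist ((A'.splitOn n).map (oW.{u} (n+1))) :=
                    List.singleton_sublist.2 (List.mem_map.2 ⟨y, hymem, rfl⟩)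
                  have := le_wsum_of_sublist hsub
                  simpa [wsum] using this
                rw [hval'wsum] at h1
                exact le_trans h1 (le_trans hβ'β.le le_rfl)
              rw [he, ← Ordinal.opow_le_iff_le_log one_lt_omega0 hβ0]
              exact hyle
            · exact blocks_chain hS' hNF'
          · intro b hb
            rcases List.mem_cons.1 hb with rfl | hb
            · exact hwNF
            · exact blocks_NF hS' hNF' _ hb
        have hallA : ¬ (A.all (· = n) = true) := by
          rw [all_eq_iff]
          intro hc
          have := hc x0 (by rw [hA]; exact List.mem_append.2 (Or.inl hx0))
          omega
        refine ⟨A, hSA, hUA, hNFA, ?_⟩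
        rw [oW_eq_wsum hSA hallA, hsplit]
        simp only [List.map_cons, wsum_cons]
        rw [hval'wsum, hwval, hsum]
    exact aux β hbig0 hβtop

end SectG

theorem oW_orderIso (k n : ℕ) :
    (∀ A ∈ SnWkN n k, oW n A < omegaTower (k+1)) ∧
    (∀ β < omegaTower (k+1), ∃ A ∈ SnWkN n k, oW n A = β) ∧
    (∀ A ∈ SnWkN n k, ∀ B ∈ SnWkN n k, oW n A = oW n B → A = B) ∧
    (∀ A ∈ SnWkN n k, ∀ B ∈ SnWkN n k, (Wlt A B ↔ oW n A < oW n B)) := by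
  refine ⟨?_, ?_, ?_, ?_⟩
  · rintro A ⟨h1, h2, h3⟩
    exact oW_lt_tower k n A h1 h2 h3
  · intro β hβ
    obtain ⟨A, hS, hU, hNF, hval⟩ := oW_surj k n β hβ
    exact ⟨A, ⟨hS, hU, hNF⟩, hval⟩
  · rintro A ⟨hS1, _, hN1⟩ B ⟨hS2, _, hN2⟩ heq
    exact oW_inj (A.length + B.length) n A B le_rfl hS1 hS2 hN1 hN2 heq
  · rintro A ⟨hS1, _, hN1⟩ B ⟨hS2, _, hN2⟩
    unfold Wlt
    rw [Wle_iff_oW hS1 hS2 hN1 hN2, Wle_iff_oW hS2 hS1 hN2 hN1]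
    exact (lt_iff_le_not_ge).symm
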